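/- Let Γ ∈ ℝ^{4×3} have rows (−1,0,1), (1,−1,0), (1,0,−1), (0,1,−1), and let T ∈ ℝ^{4×3} have rows (1,0,0), (0,1,0), (−1,0,0), (0,0,1). Then for every left inverse T' ∈ ℝ^{3×4} of T (T'T = I₃) and every V ∈ ℝ^{3×4} satisfying the N1C sign pattern relative to Γ, the matrix J = T'ΓVT ∈ ℝ^{3×3} has nonnegative off-diagonal entries; moreover J is independent of the choice of left inverse T'. -/

import Mathlib

/-- `V` satisfies the N1C sign pattern relative to `Γ`. -/
def N1CPattern {n m : ℕ} (Γ : Matrix (Fin n) (Fin m) ℝ)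
    (V : Matrix (Fin m) (Fin n) ℝ) : Prop :=
  ∀ (i : Fin n) (j : Fin m), Γ i j * V j i ≤ 0 ∧ (Γ i j = 0 → V j i = 0)

/-- With `Γ` the stoichiometric matrix of
`A ⇌ B + C, B ⇌ D, C + D ⇌ A` and `T` as given, for every left inverse `T'` of `T`
and every `V` with the N1C sign pattern relative to `Γ`, the matrix
`J = T' Γ V T` has nonnegative off-diagonal entries, and `J` does not depend on
the choice of left inverse. -/
private lemma fin_succ_two : Fin.succ (2 : Fin 3) = (3 : Fin 4) := by decide

private lemma cons_val_three' {α : Type*} (a : α) (u : Fin 3 → α) :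
    Matrix.vecCons a u 3 = u 2 := rfl

theorem stmt12 :
    let Γ : Matrix (Fin 4) (Fin 3) ℝ :=
      !![-1, 0, 1; 1, -1, 0; 1, 0, -1; 0, 1, -1]
    let T : Matrix (Fin 4) (Fin 3) ℝ :=
      !![1, 0, 0; 0, 1, 0; -1, 0, 0; 0, 0, 1]
    ∀ T' : Matrix (Fin 3) (Fin 4) ℝ, T' * T = 1 →
    ∀ V : Matrix (Fin 3) (Fin 4) ℝ, N1CPattern Γ V →
      (∀ i j : Fin 3, i ≠ j → 0 ≤ (T' * Γ * V * T) i j) ∧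
      (∀ T'' : Matrix (Fin 3) (Fin 4) ℝ, T'' * T = 1 →
        T' * Γ * V * T = T'' * Γ * V * T) := by
  intro Γ T T' hT' V hV
  set M : Matrix (Fin 3) (Fin 3) ℝ := !![-1, 0, 1; 1, -1, 0; 0, 1, -1] with hM
  have hfact : Γ = T * M := by
    ext i j
    fin_cases i <;> fin_cases j <;>
      simp [hM, Γ, T, Matrix.mul_apply, Fin.sum_univ_succ, Matrix.vecHead,
        Matrix.vecTail]
  have key : ∀ S : Matrix (Fin 3) (Fin 4) ℝ, S * T = 1 →
      S * Γ * V * T = M * V * T := by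
    intro S hS
    rw [hfact, ← Matrix.mul_assoc, hS, Matrix.one_mul]
  constructor
  · intro i j hij
    rw [key T' hT']
    -- extract sign information
    have h00 := hV 0 0; have h01 := hV 0 1; have h02 := hV 0 2
    have h10 := hV 1 0; have h11 := hV 1 1; have h12 := hV 1 2
    have h20 := hV 2 0; have h21 := hV 2 1; have h22 := hV 2 2
    have h30 := hV 3 0; have h31 := hV 3 1; have h32 := hV 3 2
    simp only [Γ] at h00 h01 h02 h10 h11 h12 h20 h21 h22 h30 h31 h32
    norm_num [cons_val_three', Matrix.cons_val_two, Matrix.cons_val', Matrix.cons_val_zero, Matrix.cons_val_one,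
      Matrix.head_cons, Matrix.head_fin_const, Matrix.cons_val_fin_one,
      Matrix.vecHead, Matrix.vecTail] at h00 h01 h02 h10 h11 h12 h20 h21 h22 h30 h31 h32
    fin_cases i <;> fin_cases j <;>
      first
        | exact absurd rfl hij
        | (simp [hM, T, Matrix.mul_apply, Matrix.vecMul, dotProduct,
            Fin.sum_univ_succ, Matrix.vecHead, Matrix.vecTail,
            fin_succ_two]; linarith)
  · intro T'' hT''
    rw [key T' hT', key T'' hT'']
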